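/- Let 𝒳 be a finite nonempty set, N ≥ 1, and let q be a pmf on 𝒳^N with coordinate random variables U¹, …, U^N. Let δ > 0 and let V ⊆ {1, …, N} be such that H(U^j | U^{1:j−1}) > log₂|𝒳| − δ for every j ∈ V (conditional entropies computed under q). Define the pmf p̃ on 𝒳^N by p̃(u^{1:N}) = ∏_{j∈V} |𝒳|^{−1} · ∏_{j∉V} q_{U^j|U^{1:j−1}}(u^j | u^{1:j−1}). Then D(q ‖ p̃) = ∑_{j∈V} ( log₂|𝒳| − H(U^j | U^{1:j−1}) ) ≤ |V| δ ≤ N δ. (Core computation of Lemma 1 of the paper, which analyzes the resolvability-achieving polar encoder; the polar transform is an invertible map and leaves both sides unchanged.) -/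

import Mathlib

open scoped ENNReal BigOperators

attribute [local instance] Classical.propDecidable

/-- Kullback–Leibler divergence (base 2) between two pmfs on a finite set,
valued in `[0, +∞]`. -/
noncomputable def klDiv {α : Type*} [Fintype α] (p q : α → ℝ) : ℝ≥0∞ :=
  if ∀ x, q x = 0 → p x = 0 then
    ENNReal.ofReal (∑ x, p x * Real.logb 2 (p x / q x))
  else ⊤

/-- A probability mass function on a finite set. -/
def IsPMF {α : Type*} [Fintype α] (p : α → ℝ) : Prop :=
  (∀ x, 0 ≤ p x) ∧ ∑ x, p x = 1

/-- Probability, under the pmf `q` on `𝒳^N`, that the coordinates strictly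
before `j` agree with `u`. -/
noncomputable def prefLT {𝒳 : Type*} [Fintype 𝒳] [DecidableEq 𝒳] {N : ℕ}
    (q : (Fin N → 𝒳) → ℝ) (j : Fin N) (u : Fin N → 𝒳) : ℝ :=
  ∑ x : Fin N → 𝒳, if ∀ l, l < j → x l = u l then q x else 0

/-- Probability, under the pmf `q` on `𝒳^N`, that the coordinates up to and
including `j` agree with `u`. -/
noncomputable def prefLE {𝒳 : Type*} [Fintype 𝒳] [DecidableEq 𝒳] {N : ℕ}
    (q : (Fin N → 𝒳) → ℝ) (j : Fin N) (u : Fin N → 𝒳) : ℝ :=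
  ∑ x : Fin N → 𝒳, if ∀ l, l ≤ j → x l = u l then q x else 0

/-- Conditional probability `q_{U^j | U^{1:j−1}}(u^j | u^{1:j−1})`, with the
uniform distribution chosen for conditioning prefixes of probability zero. -/
noncomputable def condProb {𝒳 : Type*} [Fintype 𝒳] [DecidableEq 𝒳] {N : ℕ}
    (q : (Fin N → 𝒳) → ℝ) (j : Fin N) (u : Fin N → 𝒳) : ℝ :=
  if prefLT q j u = 0 then (Fintype.card 𝒳 : ℝ)⁻¹ else prefLE q j u / prefLT q j u

/-- Conditional Shannon entropy `H(U^j | U^{1:j−1})` under the pmf `q`,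
i.e. the expectation over prefixes of the entropy of the conditional pmf. -/
noncomputable def condEnt {𝒳 : Type*} [Fintype 𝒳] [DecidableEq 𝒳] {N : ℕ}
    (q : (Fin N → 𝒳) → ℝ) (j : Fin N) : ℝ :=
  -∑ u, q u * Real.logb 2 (condProb q j u)

section Aux
variable {𝒳 : Type*} [Fintype 𝒳] [DecidableEq 𝒳] [Nonempty 𝒳] {N : ℕ}

noncomputable def pref (q : (Fin N → 𝒳) → ℝ) (u : Fin N → 𝒳) (k : ℕ) : ℝ :=
  ∑ x : Fin N → 𝒳, if ∀ l : Fin N, (l : ℕ) < k → x l = u l then q x else 0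

lemma prefLT_eq (q : (Fin N → 𝒳) → ℝ) (j : Fin N) (u : Fin N → 𝒳) :
    prefLT q j u = pref q u j := by
  unfold prefLT pref
  apply Finset.sum_congr rfl
  intro x _
  apply if_congr _ rfl rfl
  exact forall_congr' fun l => by rw [Fin.lt_def]

lemma prefLE_eq (q : (Fin N → 𝒳) → ℝ) (j : Fin N) (u : Fin N → 𝒳) :
    prefLE q j u = pref q u (j + 1) := by
  unfold prefLE pref
  apply Finset.sum_congr rfl
  intro x _
  apply if_congr _ rfl rfl
  exact forall_congr' fun l => by rw [Fin.le_def, ← Nat.lt_succ_iff]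

lemma pref_zero (q : (Fin N → 𝒳) → ℝ) (hq : IsPMF q) (u : Fin N → 𝒳) :
    pref q u 0 = 1 := by
  simp [pref, hq.2]

lemma pref_N (q : (Fin N → 𝒳) → ℝ) (u : Fin N → 𝒳) : pref q u N = q u := by
  have : ∀ x : Fin N → 𝒳, (∀ l : Fin N, (l : ℕ) < N → x l = u l) ↔ x = u := by
    intro x
    constructor
    · intro h; funext l; exact h l l.isLt
    · intro h l _; rw [h]
  simp only [pref]
  rw [Finset.sum_congr rfl (fun x _ => by rw [if_congr (this x) rfl rfl])]
  simp

lemma le_pref (q : (Fin N → 𝒳) → ℝ) (hq : IsPMF q) (u : Fin N → 𝒳) (k : ℕ) :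
    q u ≤ pref q u k := by
  have h : q u = (if ∀ l : Fin N, (l : ℕ) < k → u l = u l then q u else 0) := by simp
  rw [h]
  exact Finset.single_le_sum (f := fun x => if ∀ l : Fin N, (l : ℕ) < k → x l = u l then q x else 0)
    (fun x _ => by split <;> simp [hq.1 x]) (Finset.mem_univ u)

lemma telescope (f : ℕ → ℝ) (hf : ∀ k, f k ≠ 0) (n : ℕ) :
    ∏ k ∈ Finset.range n, f (k + 1) / f k = f n / f 0 := by
  induction n with
  | zero => simp [div_self (hf 0)]
  | succ n ih =>
      rw [Finset.prod_range_succ, ih, div_mul_div_comm, mul_comm (f 0),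
        mul_div_mul_left _ _ (hf n)]

lemma condProb_pos (q : (Fin N → 𝒳) → ℝ) (hq : IsPMF q) (j : Fin N) (u : Fin N → 𝒳)
    (hu : 0 < q u) : 0 < condProb q j u := by
  rw [condProb]
  split
  · positivity
  · have h1 : 0 < prefLE q j u := lt_of_lt_of_le hu (by rw [prefLE_eq]; exact le_pref q hq u _)
    have h2 : 0 < prefLT q j u := lt_of_lt_of_le hu (by rw [prefLT_eq]; exact le_pref q hq u _)
    positivity

lemma chain_rule (q : (Fin N → 𝒳) → ℝ) (hq : IsPMF q) (u : Fin N → 𝒳) (hu : 0 < q u) :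
    ∏ j : Fin N, condProb q j u = q u := by
  have hne : ∀ k, pref q u k ≠ 0 := fun k => ne_of_gt (lt_of_lt_of_le hu (le_pref q hq u k))
  have h1 : ∀ j : Fin N, condProb q j u = pref q u (j + 1) / pref q u j := by
    intro j
    rw [condProb, if_neg (by rw [prefLT_eq]; exact hne j), prefLE_eq, prefLT_eq]
  calc ∏ j : Fin N, condProb q j u
      = ∏ j : Fin N, pref q u ((j : ℕ) + 1) / pref q u (j : ℕ) :=
        Finset.prod_congr rfl (fun j _ => h1 j)
    _ = ∏ k ∈ Finset.range N, pref q u (k + 1) / pref q u k :=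
        Fin.prod_univ_eq_prod_range (fun k => pref q u (k + 1) / pref q u k) N
    _ = pref q u N / pref q u 0 := telescope _ hne N
    _ = q u := by rw [pref_N, pref_zero q hq]; simp

end Aux


/-- Core computation of Lemma 1: for the polar-encoder distribution `p̃` that
replaces the conditionals on `V` by the uniform distribution,
`D(q‖p̃) = ∑_{j∈V} (log₂|𝒳| − H(U^j|U^{1:j−1})) ≤ |V| δ ≤ N δ`. -/
theorem klDiv_resolvability_encoder
    {𝒳 : Type*} [Fintype 𝒳] [DecidableEq 𝒳] [Nonempty 𝒳] {N : ℕ} (hN : 1 ≤ N)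
    (q : (Fin N → 𝒳) → ℝ) (hq : IsPMF q) (δ : ℝ) (hδ : 0 < δ)
    (V : Finset (Fin N))
    (hV : ∀ j ∈ V, Real.logb 2 (Fintype.card 𝒳) - δ < condEnt q j) :
    klDiv q (fun u => ∏ j : Fin N,
        if j ∈ V then (Fintype.card 𝒳 : ℝ)⁻¹ else condProb q j u) =
      ENNReal.ofReal
        (∑ j ∈ V, (Real.logb 2 (Fintype.card 𝒳) - condEnt q j)) ∧
    ∑ j ∈ V, (Real.logb 2 (Fintype.card 𝒳) - condEnt q j) ≤ (V.card : ℝ) * δ ∧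
    (V.card : ℝ) * δ ≤ (N : ℝ) * δ := by
  set p : (Fin N → 𝒳) → ℝ := fun u => ∏ j : Fin N,
      if j ∈ V then (Fintype.card 𝒳 : ℝ)⁻¹ else condProb q j u with hp
  have hcard : (0 : ℝ) < (Fintype.card 𝒳 : ℝ) := by
    exact_mod_cast Fintype.card_pos
  have hppos : ∀ u, 0 < q u → 0 < p u := by
    intro u hu
    apply Finset.prod_pos
    intro j _
    split
    · positivity
    · exact condProb_pos q hq j u hu
  have hqnn : ∀ u, 0 ≤ q u := hq.1
  -- pointwise log identity
  have hlog : ∀ u, 0 < q u →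
      Real.logb 2 (q u / p u) =
        ∑ j ∈ V, (Real.logb 2 (Fintype.card 𝒳) + Real.logb 2 (condProb q j u)) := by
    intro u hu
    have hcp : ∀ j : Fin N, 0 < condProb q j u := fun j => condProb_pos q hq j u hu
    have hratio : q u / p u = ∏ j : Fin N,
        (condProb q j u / if j ∈ V then (Fintype.card 𝒳 : ℝ)⁻¹ else condProb q j u) := by
      rw [← chain_rule q hq u hu, hp, ← Finset.prod_div_distrib]
    rw [hratio]
    have hfac : ∀ j : Fin N,
        (condProb q j u / if j ∈ V then (Fintype.card 𝒳 : ℝ)⁻¹ else condProb q j u) =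
        if j ∈ V then condProb q j u * (Fintype.card 𝒳 : ℝ) else 1 := by
      intro j
      split
      · rw [div_eq_mul_inv, inv_inv]
      · exact div_self (ne_of_gt (hcp j))
    rw [Finset.prod_congr rfl (fun j _ => hfac j)]
    have hnz : ∀ j ∈ Finset.univ,
        (if j ∈ V then condProb q j u * (Fintype.card 𝒳 : ℝ) else 1) ≠ 0 := by
      intro j _
      split
      · exact ne_of_gt (mul_pos (hcp j) hcard)
      · exact one_ne_zero
    rw [Real.logb, Real.log_prod hnz]
    rw [Finset.sum_div]
    rw [← Finset.sum_filter_add_sum_filter_not Finset.univ (· ∈ V)]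
    have h2 : ∑ j ∈ Finset.univ.filter (· ∉ V),
        Real.log (if j ∈ V then condProb q j u * (Fintype.card 𝒳 : ℝ) else 1) / Real.log 2 = 0 := by
      apply Finset.sum_eq_zero
      intro j hj
      simp only [Finset.mem_filter] at hj
      rw [if_neg hj.2]
      simp
    rw [h2, add_zero]
    have h3 : Finset.univ.filter (· ∈ V) = V := by
      ext j; simp
    rw [h3]
    apply Finset.sum_congr rfl
    intro j hj
    rw [if_pos hj]
    rw [show Real.log (condProb q j u * (Fintype.card 𝒳 : ℝ)) / Real.log 2
        = Real.logb 2 (condProb q j u * (Fintype.card 𝒳 : ℝ)) from rfl]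
    rw [Real.logb_mul (ne_of_gt (hcp j)) (ne_of_gt hcard)]
    ring
  -- sum identity
  have hsum : ∑ u, q u * Real.logb 2 (q u / p u) =
      ∑ j ∈ V, (Real.logb 2 (Fintype.card 𝒳) - condEnt q j) := by
    have lhs_eq : ∑ u, q u * Real.logb 2 (q u / p u) =
        ∑ u, ∑ j ∈ V, (q u * Real.logb 2 (Fintype.card 𝒳)
          + q u * Real.logb 2 (condProb q j u)) := by
      apply Finset.sum_congr rfl
      intro u _
      rcases eq_or_lt_of_le (hqnn u) with h | h
      · simp [← h]
      · rw [hlog u h, Finset.mul_sum]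
        apply Finset.sum_congr rfl
        intro j _
        ring
    rw [lhs_eq, Finset.sum_comm]
    apply Finset.sum_congr rfl
    intro j _
    rw [Finset.sum_add_distrib, ← Finset.sum_mul, hq.2, one_mul, condEnt]
    ring
  refine ⟨?_, ?_, ?_⟩
  · rw [klDiv, if_pos, hsum]
    intro u hpu
    by_contra hqu
    have : 0 < q u := lt_of_le_of_ne (hqnn u) (Ne.symm hqu)
    exact absurd hpu (ne_of_gt (hppos u this))
  · calc ∑ j ∈ V, (Real.logb 2 (Fintype.card 𝒳) - condEnt q j)
        ≤ ∑ j ∈ V, δ := by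
          apply Finset.sum_le_sum
          intro j hj
          have := hV j hj
          linarith
      _ = (V.card : ℝ) * δ := by rw [Finset.sum_const, nsmul_eq_mul]
  · apply mul_le_mul_of_nonneg_right _ (le_of_lt hδ)
    exact_mod_cast Finset.card_le_univ V |>.trans (le_of_eq (by simp))
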